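/- Any Σ-OWA maximal assignment is Pareto optimal with respect to pairwise comparisons: if A maximizes ∑_{i∈N} OWA_α(ω_i(A)) over all feasible assignments, then there is no feasible assignment A' such that every agent weakly prefers A'(i) to A(i) with respect to pairwise comparisons (with equal allocation sizes) and at least one agent's OWA value strictly increases. -/

import Mathlib

noncomputable def sortDesc {K : ℕ} (x : Fin K → ℝ) : Fin K → ℝ :=
  x ∘ Tuple.sort (fun i => -x i)

noncomputable def owa {K : ℕ} (α x : Fin K → ℝ) : ℝ :=
  ∑ i, α i * sortDesc x i

noncomputable def owaVal (K : ℕ) (α : Fin K → ℝ) (vals : Multiset ℝ) : ℝ :=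
  ∑ j : Fin K, α j * ((Multiset.sort vals (· ≤ ·)).reverse.getD j 0)

private lemma sorted_cons_orderedInsert {c : ℝ} {L : List ℝ}
    (h : L.Pairwise (· ≤ ·) ∧ ∀ x ∈ L, c ≤ x) :
    List.orderedInsert (· ≤ ·) c L = c :: L := by
  cases L with
  | nil => rfl
  | cons d L' =>
      simp only [List.orderedInsert, if_pos (h.2 d (by simp))]

private lemma orderedInsert_getD_mono :
    ∀ (L : List ℝ), L.Pairwise (· ≤ ·) → ∀ (a b : ℝ), a ≤ b →
      ∀ k, (List.orderedInsert (· ≤ ·) a L).getD k 0 ≤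
           (List.orderedInsert (· ≤ ·) b L).getD k 0 := by
  intro L
  induction L with
  | nil =>
      intro _ a b hab k
      cases k <;> simp [List.orderedInsert, hab]
  | cons c L ih =>
      intro hs a b hab k
      rw [List.pairwise_cons] at hs
      by_cases hac : a ≤ c
      · by_cases hbc : b ≤ c
        · simp only [List.orderedInsert, if_pos hac, if_pos hbc]
          cases k <;> simp [hab]
        · simp only [List.orderedInsert, if_pos hac, if_neg hbc]
          cases k with
          | zero => simpa using hac
          | succ k =>
              simp only [List.getD_cons_succ]
              have := ih hs.2 c b (le_of_not_ge hbc) k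
              rwa [sorted_cons_orderedInsert ⟨hs.2, hs.1⟩] at this
      · have hbc : ¬ b ≤ c := fun h => hac (hab.trans h)
        simp only [List.orderedInsert, if_neg hac, if_neg hbc]
        cases k with
        | zero => simp
        | succ k =>
            simp only [List.getD_cons_succ]
            exact ih hs.2 a b hab k

private lemma msort_cons (a : ℝ) (m : Multiset ℝ) :
    Multiset.sort (a ::ₘ m) (· ≤ ·) =
      List.orderedInsert (· ≤ ·) a (Multiset.sort m (· ≤ ·)) := by
  refine (fun p s1 s2 => List.Perm.eq_of_pairwise' (r := fun x y : ℝ => x ≤ y) s1 s2 p) ?_ ?_ ?_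
  · refine (Multiset.coe_eq_coe.mp ?_).trans
      ((List.perm_orderedInsert _ a _).symm)
    rw [Multiset.sort_eq]
    change a ::ₘ m = ↑(a :: Multiset.sort m (· ≤ ·))
    rw [← Multiset.cons_coe, Multiset.sort_eq]
  · exact Multiset.pairwise_sort _ _
  · exact (Multiset.pairwise_sort m _).orderedInsert a _

private lemma getD_rev_mono {a b : ℝ} (hab : a ≤ b) (m : Multiset ℝ) (j : ℕ) :
    (Multiset.sort (a ::ₘ m) (· ≤ ·)).reverse.getD j 0 ≤
      (Multiset.sort (b ::ₘ m) (· ≤ ·)).reverse.getD j 0 := by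
  have hla : (Multiset.sort (a ::ₘ m) (· ≤ ·)).length = Multiset.card m + 1 := by
    simp [Multiset.length_sort]
  have hlb : (Multiset.sort (b ::ₘ m) (· ≤ ·)).length = Multiset.card m + 1 := by
    simp [Multiset.length_sort]
  by_cases hj : j < Multiset.card m + 1
  · have ha' : j < (Multiset.sort (a ::ₘ m) (· ≤ ·)).reverse.length := by
      simpa [hla] using hj
    have hb' : j < (Multiset.sort (b ::ₘ m) (· ≤ ·)).reverse.length := by
      simpa [hlb] using hj
    rw [List.getD_eq_getElem _ _ ha', List.getD_eq_getElem _ _ hb',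
      List.getElem_reverse, List.getElem_reverse]
    have h1 : (Multiset.sort (a ::ₘ m) (· ≤ ·)).length - 1 - j < (Multiset.sort (a ::ₘ m) (· ≤ ·)).length := by
      omega
    have h2 : (Multiset.sort (b ::ₘ m) (· ≤ ·)).length - 1 - j < (Multiset.sort (b ::ₘ m) (· ≤ ·)).length := by
      omega
    rw [← List.getD_eq_getElem _ 0 h1, ← List.getD_eq_getElem _ 0 h2]
    rw [hla, hlb, msort_cons, msort_cons]
    exact orderedInsert_getD_mono _ (Multiset.pairwise_sort m _) a b hab _
  · rw [List.getD_eq_default, List.getD_eq_default] <;> simp [hla, hlb] <;> omega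

private lemma owaVal_swap_mono (K : ℕ) (α : Fin K → ℝ) (hα : ∀ j, 0 ≤ α j)
    {a b : ℝ} (hab : a ≤ b) (m : Multiset ℝ) :
    owaVal K α (a ::ₘ m) ≤ owaVal K α (b ::ₘ m) := by
  refine Finset.sum_le_sum fun j _ => ?_
  exact mul_le_mul_of_nonneg_left (getD_rev_mono hab m j) (hα j)

/-- A Σ-OWA maximal assignment is Pareto optimal with respect to pairwise comparisons. -/
theorem sigma_owa_pareto_optimal {N O : Type*} [Fintype N] [DecidableEq O]
    (u : N → O → ℝ) (K : ℕ) (α : Fin K → ℝ) (hα : ∀ j, 0 ≤ α j)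
    (Feasible : (N → Finset O) → Prop)
    (step : N → Finset O → Finset O → Prop)
    (hstep : ∀ (i : N) (S T : Finset O), step i S T ↔
      ∃ o ∈ T, ∃ o', o' ∉ T ∧ u i o ≤ u i o' ∧ S = insert o' (T.erase o))
    (A : N → Finset O) (hA : Feasible A)
    (hmax : ∀ B, Feasible B →
      ∑ i, owaVal K α ((B i).val.map (u i)) ≤ ∑ i, owaVal K α ((A i).val.map (u i))) :
    ¬ ∃ A', Feasible A' ∧ (∀ i, Relation.ReflTransGen (step i) (A' i) (A i)) ∧
      ∃ i, owaVal K α ((A i).val.map (u i)) < owaVal K α ((A' i).val.map (u i)) := by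
  rintro ⟨A', hA', hpref, i₀, hi₀⟩
  -- a single step weakly increases the OWA value
  have hstep_mono : ∀ (i : N) (S T : Finset O), step i S T →
      owaVal K α (T.val.map (u i)) ≤ owaVal K α (S.val.map (u i)) := by
    intro i S T h
    rw [hstep] at h
    obtain ⟨o, ho, o', ho', huv, hS⟩ := h
    have hT : T.val = o ::ₘ T.val.erase o := (Multiset.cons_erase ho).symm
    have hS' : S.val = o' ::ₘ T.val.erase o := by
      rw [hS, Finset.insert_val_of_notMem (by simp [Finset.mem_erase, ho']),
        Finset.erase_val]
    rw [hT, hS', Multiset.map_cons, Multiset.map_cons]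
    exact owaVal_swap_mono K α hα huv _
  -- along a chain, OWA value weakly increases backwards
  have hchain' : ∀ (i : N) (S T : Finset O), Relation.ReflTransGen (step i) S T →
      owaVal K α (T.val.map (u i)) ≤ owaVal K α (S.val.map (u i)) := by
    intro i S T h
    induction h with
    | refl => exact le_rfl
    | tail h hbc ih => exact (hstep_mono i _ _ hbc).trans ih
  have hchain : ∀ i, owaVal K α ((A i).val.map (u i)) ≤ owaVal K α ((A' i).val.map (u i)) :=
    fun i => hchain' i _ _ (hpref i)
  have hsum : ∑ i, owaVal K α ((A i).val.map (u i)) <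
      ∑ i, owaVal K α ((A' i).val.map (u i)) :=
    Finset.sum_lt_sum (fun i _ => hchain i) ⟨i₀, Finset.mem_univ i₀, hi₀⟩
  exact absurd (hmax A' hA') (not_le.mpr hsum)
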